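/- For every (x,y,z) ∈ ℂ³ with y ≠ 3 and P(x,y,z) = 0 (P Lawton's polynomial), the matrix A₂ with rows [0, (3x+3y+z-21)/(y-3)², -(63+x²-15x-27y+3xy+3y²)/(y-3)³], [0, -(x-3)/(y-3), (30-6x-6y+xy-z)/(y-3)²], [y-3, 0, 3+(x-3)/(y-3)] has determinant 1. -/

import Mathlib

open Matrix

noncomputable def LawtonP (x y z : ℂ) : ℂ :=
  414 - 108 * x + x ^ 3 - 108 * y + 21 * x * y + y ^ 3
    - (51 - 9 * x - 9 * y + x * y) * z + z ^ 2

theorem stmt_7 (x y z : ℂ) (hy : y ≠ 3) (hP : LawtonP x y z = 0) :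
    (!![0, (3*x + 3*y + z - 21) / (y - 3) ^ 2,
          -(63 + x ^ 2 - 15*x - 27*y + 3*x*y + 3*y ^ 2) / (y - 3) ^ 3;
        0, -(x - 3) / (y - 3), (30 - 6*x - 6*y + x*y - z) / (y - 3) ^ 2;
        y - 3, 0, 3 + (x - 3) / (y - 3)] : Matrix (Fin 3) (Fin 3) ℂ).det = 1 := by
  unfold LawtonP at hP
  have h3 : y - 3 ≠ 0 := sub_ne_zero.mpr hy
  rw [Matrix.det_fin_three]
  simp only [Matrix.cons_val_zero, Matrix.cons_val_one, Matrix.head_cons, Matrix.cons_val_two,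
    Matrix.tail_cons, Matrix.of_apply, Matrix.cons_val', Matrix.empty_val',
    Matrix.cons_val_fin_one, Matrix.vecHead]
  field_simp
  ring_nf
  ring_nf at hP
  linear_combination (-1)*hP
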